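/- Let S₁ = (1/2)·[[1,0],[3/2,−1]] and S₂ = √((3−√5)/2)·[[1,1],[0,1]]. Then ρ(S₁) = 1/2 < 1, ρ(S₂) = √((3−√5)/2) < 1, ρ(S₁S₂) = √((3−√5)/2) < 1, and ‖S₁‖₂ = ‖S₂‖₂ = 1; consequently the switched system {S₁,S₂} is absolutely stable. -/

import Mathlib

open Matrix Filter
open scoped ENNReal

noncomputable def Pnorm {d : ℕ} (P : Matrix (Fin d) (Fin d) ℝ) (x : Fin d → ℝ) : ℝ :=
  Real.sqrt (x ⬝ᵥ P.mulVec x)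

noncomputable def PopNorm {d : ℕ} (P A : Matrix (Fin d) (Fin d) ℝ) : ℝ :=
  sSup ((fun x => Pnorm P (A.mulVec x)) '' {x | Pnorm P x = 1})

noncomputable def PcoNorm {d : ℕ} (P A : Matrix (Fin d) (Fin d) ℝ) : ℝ :=
  sInf ((fun x => Pnorm P (A.mulVec x)) '' {x | Pnorm P x = 1})

noncomputable def specRad {d : ℕ} (A : Matrix (Fin d) (Fin d) ℝ) : ℝ≥0∞ :=
  spectralRadius ℂ (A.map Complex.ofReal)

def prodsW {d K : ℕ} (S : Fin K → Matrix (Fin d) (Fin d) ℝ) (σ : ℕ → Fin K) :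
    ℕ → Matrix (Fin d) (Fin d) ℝ
  | 0 => 1
  | n + 1 => S (σ n) * prodsW S σ n

def omegaSet {d K : ℕ} (S : Fin K → Matrix (Fin d) (Fin d) ℝ) (σ : ℕ → Fin K) :
    Set (Matrix (Fin d) (Fin d) ℝ) :=
  {M | ∃ φ : ℕ → ℕ, StrictMono φ ∧ Tendsto (fun i => prodsW S σ (φ i)) atTop (nhds M)}


noncomputable def cg : ℝ := Real.sqrt ((3 - Real.sqrt 5) / 2)

noncomputable def R1 : Matrix (Fin 2) (Fin 2) ℝ := (1 / 2 : ℝ) • !![1, 0; 3 / 2, -1]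
noncomputable def R2 : Matrix (Fin 2) (Fin 2) ℝ := cg • !![1, 1; 0, 1]

lemma w_sq : Real.sqrt 5 ^ 2 = 5 := Real.sq_sqrt (by norm_num)
lemma w_lb : (2.23 : ℝ) ≤ Real.sqrt 5 := by
  nlinarith [w_sq, Real.sqrt_nonneg 5]
lemma w_ub : Real.sqrt 5 ≤ 2.24 := by
  nlinarith [w_sq, Real.sqrt_nonneg 5]
lemma cg_nonneg : 0 ≤ cg := Real.sqrt_nonneg _
lemma cg_sq : cg ^ 2 = (3 - Real.sqrt 5) / 2 := Real.sq_sqrt (by nlinarith [w_ub])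
lemma cg_lt_one : cg < 1 := by
  nlinarith [cg_sq, cg_nonneg, w_lb]

lemma hR1 : R1 = !![1/2, 0; 3/4, -(1/2)] := by
  rw [R1]; ext i j; fin_cases i <;> fin_cases j <;> simp <;> norm_num
lemma hR2 : R2 = !![cg, cg; 0, cg] := by
  rw [R2]; ext i j; fin_cases i <;> fin_cases j <;> simp

lemma spec2 (M : Matrix (Fin 2) (Fin 2) ℂ) (a b : ℂ)
    (h : ∀ z : ℂ, (z - M 0 0) * (z - M 1 1) - M 0 1 * M 1 0 = (z - a) * (z - b)) :
    spectrum ℂ M = {a, b} := by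
  ext z
  rw [spectrum.mem_iff, Matrix.isUnit_iff_isUnit_det, isUnit_iff_ne_zero, not_not]
  have hd : ((algebraMap ℂ (Matrix (Fin 2) (Fin 2) ℂ)) z - M).det = (z - a) * (z - b) := by
    rw [Matrix.det_fin_two]
    simp [Matrix.algebraMap_eq_diagonal, Matrix.diagonal_apply]
    rw [← h z]
  rw [hd, mul_eq_zero, sub_eq_zero, sub_eq_zero]
  simp [Set.mem_insert_iff]


lemma map1 : R1.map Complex.ofReal = !![1/2, 0; 3/4, -(1/2)] := by
  rw [hR1]; ext i j; fin_cases i <;> fin_cases j <;> simp <;> norm_num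
lemma map2 : R2.map Complex.ofReal = !![(cg:ℂ), cg; 0, cg] := by
  rw [hR2]; ext i j; fin_cases i <;> fin_cases j <;> simp

lemma spec_R1 : spectrum ℂ (R1.map Complex.ofReal) = {(1/2 : ℂ), -(1/2)} := by
  rw [map1]; apply spec2 <;> intro z <;> simp <;> ring

lemma spec_R2 : spectrum ℂ (R2.map Complex.ofReal) = {(cg:ℂ), (cg:ℂ)} := by
  rw [map2]; apply spec2 <;> intro z <;> simp <;> ring

lemma map12 : (R1 * R2).map Complex.ofReal = !![(cg:ℂ)/2, (cg:ℂ)/2; 3*(cg:ℂ)/4, (cg:ℂ)/4] := by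
  have : (R1 * R2).map Complex.ofReal = (R1.map Complex.ofReal) * (R2.map Complex.ofReal) := by
    ext i j; simp [Matrix.mul_apply, Fin.sum_univ_two]
  rw [this, map1, map2, Matrix.mul_fin_two]
  ext i j; fin_cases i <;> fin_cases j <;> (try simp) <;> (try norm_num) <;> ring_nf

lemma spec_R12 : spectrum ℂ ((R1 * R2).map Complex.ofReal) = {(cg:ℂ), -(cg:ℂ)/4} := by
  rw [map12]; apply spec2; intro z; simp; ring

lemma sr_of_spec (A : Matrix (Fin 2) (Fin 2) ℝ) (a b : ℂ)
    (h : spectrum ℂ (A.map Complex.ofReal) = {a, b}) :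
    specRad A = (‖a‖₊ : ℝ≥0∞) ⊔ (‖b‖₊ : ℝ≥0∞) := by
  rw [specRad, spectralRadius, h, iSup_pair]

lemma sr_R1 : specRad R1 = ENNReal.ofReal (1/2) := by
  rw [sr_of_spec R1 _ _ spec_R1]
  simp only [← ENNReal.ofReal_coe_nnreal, coe_nnnorm]
  norm_num

lemma sup_ofReal (x y : ℝ) (h : y ≤ x) : ENNReal.ofReal x ⊔ ENNReal.ofReal y = ENNReal.ofReal x := by
  rw [sup_eq_left]; exact ENNReal.ofReal_le_ofReal h

lemma sr_R2 : specRad R2 = ENNReal.ofReal cg := by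
  rw [sr_of_spec R2 _ _ spec_R2]
  simp only [← ENNReal.ofReal_coe_nnreal, coe_nnnorm]
  simp [Complex.norm_real, abs_of_nonneg cg_nonneg]

lemma sr_R12 : specRad (R1 * R2) = ENNReal.ofReal cg := by
  rw [sr_of_spec (R1*R2) _ _ spec_R12]
  simp only [← ENNReal.ofReal_coe_nnreal, coe_nnnorm]
  have h1 : ‖((cg:ℂ))‖ = cg := by simp [Complex.norm_real, abs_of_nonneg cg_nonneg]
  have h2 : ‖(-(cg:ℂ)/4)‖ = cg/4 := by
    rw [norm_div, norm_neg]
    simp [Complex.norm_real, abs_of_nonneg cg_nonneg]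
  rw [h1, h2, sup_ofReal]
  nlinarith [cg_nonneg]


lemma Pnorm_one (x : Fin 2 → ℝ) : Pnorm 1 x = Real.sqrt (x 0 ^ 2 + x 1 ^ 2) := by
  simp [Pnorm, Matrix.one_mulVec, dotProduct, Fin.sum_univ_two, sq]

lemma mulVec0 (A : Matrix (Fin 2) (Fin 2) ℝ) (x : Fin 2 → ℝ) :
    A.mulVec x 0 = A 0 0 * x 0 + A 0 1 * x 1 := by
  simp [Matrix.mulVec, dotProduct, Fin.sum_univ_two]
lemma mulVec1 (A : Matrix (Fin 2) (Fin 2) ℝ) (x : Fin 2 → ℝ) :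
    A.mulVec x 1 = A 1 0 * x 0 + A 1 1 * x 1 := by
  simp [Matrix.mulVec, dotProduct, Fin.sum_univ_two]

lemma popnorm_eq_one (A : Matrix (Fin 2) (Fin 2) ℝ)
    (hub : ∀ x : Fin 2 → ℝ, x 0 ^ 2 + x 1 ^ 2 = 1 →
      (A.mulVec x 0) ^ 2 + (A.mulVec x 1) ^ 2 ≤ 1)
    (xs : Fin 2 → ℝ) (hxs : xs 0 ^ 2 + xs 1 ^ 2 = 1)
    (hAxs : (A.mulVec xs 0) ^ 2 + (A.mulVec xs 1) ^ 2 = 1) :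
    PopNorm 1 A = 1 := by
  have hub' : ∀ y ∈ ((fun x => Pnorm 1 (A.mulVec x)) '' {x | Pnorm 1 x = 1}), y ≤ 1 := by
    rintro y ⟨x, hx, rfl⟩
    rw [Set.mem_setOf_eq, Pnorm_one, Real.sqrt_eq_one] at hx
    show Pnorm 1 (A.mulVec x) ≤ 1
    rw [Pnorm_one]
    have h2 := hub x hx
    calc Real.sqrt (A.mulVec x 0 ^ 2 + A.mulVec x 1 ^ 2) ≤ Real.sqrt 1 := Real.sqrt_le_sqrt h2
    _ = 1 := Real.sqrt_one
  apply le_antisymm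
  · exact Real.sSup_le hub' one_pos.le
  · apply le_csSup ⟨1, hub'⟩
    refine ⟨xs, ?_, ?_⟩
    · rw [Set.mem_setOf_eq, Pnorm_one, hxs, Real.sqrt_one]
    · show Pnorm 1 (A.mulVec xs) = 1
      rw [Pnorm_one, hAxs, Real.sqrt_one]

lemma popnorm_R1 : PopNorm 1 R1 = 1 := by
  have hw := w_sq
  have hw0 : Real.sqrt 5 ≠ 0 := by nlinarith [w_lb]
  apply popnorm_eq_one R1 _ ![-2/Real.sqrt 5, 1/Real.sqrt 5]
  · simp; field_simp; nlinarith
  · rw [mulVec0, mulVec1, hR1]; simp; field_simp; nlinarith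
  · intro x hx
    rw [mulVec0, mulVec1, hR1]; simp
    nlinarith [sq_nonneg (x 0 + 2 * x 1)]

lemma popnorm_R2 : PopNorm 1 R2 = 1 := by
  have hw := w_sq
  have hwlb := w_lb
  have hwub := w_ub
  set w := Real.sqrt 5 with hwdef
  have hrnn : (0:ℝ) ≤ (5 - w)/2 := by nlinarith
  have hρ2 : Real.sqrt ((5 - w)/2) ^ 2 = (5 - w)/2 := Real.sq_sqrt hrnn
  set ρ := Real.sqrt ((5 - w)/2) with hρdef
  have hρ0 : ρ ≠ 0 := by nlinarith [Real.sqrt_nonneg ((5 - w)/2)]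
  have hcg := cg_sq
  have h5w : (0:ℝ) < 5 - w := by nlinarith
  apply popnorm_eq_one R2 _ ![(w-1)/(2*ρ), 1/ρ]
  · show ((w-1)/(2*ρ))^2 + (1/ρ)^2 = 1
    have expand2 : ((w-1)/(2*ρ))^2 + (1/ρ)^2 = ((w-1)^2 + 4)/(4*ρ^2) := by
      field_simp; ring
    rw [expand2, hρ2]
    rw [div_eq_one_iff_eq (by nlinarith)]
    linear_combination hw
  · rw [mulVec0, mulVec1, hR2]
    show (cg * ((w-1)/(2*ρ)) + cg * (1/ρ))^2 + (0 * ((w-1)/(2*ρ)) + cg * (1/ρ))^2 = 1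
    have expand3 : (cg * ((w-1)/(2*ρ)) + cg * (1/ρ))^2 + (0 * ((w-1)/(2*ρ)) + cg * (1/ρ))^2
        = cg^2 * ((w+1)^2 + 4)/(4*ρ^2) := by
      field_simp; ring
    rw [expand3, hρ2, hcg]
    rw [div_eq_one_iff_eq (by nlinarith)]
    linear_combination ((1-w)/2) * hw
  · intro x hx
    rw [mulVec0, mulVec1, hR2]
    show (cg * x 0 + cg * x 1)^2 + (0 * x 0 + cg * x 1)^2 ≤ 1
    have key : 1 - cg^2 * ((x 0 + x 1)^2 + x 1^2) = (w-1)/8 * (2*x 0 - (w-1)*x 1)^2 := by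
      linear_combination (-((x 0 + x 1)^2 + x 1^2)) * hcg
        + (3/8*(x 1)^2 + 1/2*(x 0)*(x 1) - 1/8*w*(x 1)^2) * hw + (-1) * hx
    have pos : 0 ≤ (w-1)/8 * (2*x 0 - (w-1)*x 1)^2 :=
      mul_nonneg (by nlinarith) (sq_nonneg _)
    nlinarith [key, pos]

noncomputable def F2 (A : Matrix (Fin 2) (Fin 2) ℝ) : ℝ :=
  A 0 0 ^ 2 + A 0 1 ^ 2 + A 1 0 ^ 2 + A 1 1 ^ 2

lemma F2_nonneg (A : Matrix (Fin 2) (Fin 2) ℝ) : 0 ≤ F2 A := by unfold F2; positivity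

lemma F2_mul (A B : Matrix (Fin 2) (Fin 2) ℝ) : F2 (A * B) ≤ F2 A * F2 B := by
  unfold F2
  simp only [Matrix.mul_apply, Fin.sum_univ_two]
  nlinarith [sq_nonneg (A 0 0 * B 1 0 - A 0 1 * B 0 0), sq_nonneg (A 0 0 * B 1 1 - A 0 1 * B 0 1),
    sq_nonneg (A 1 0 * B 1 0 - A 1 1 * B 0 0), sq_nonneg (A 1 0 * B 1 1 - A 1 1 * B 0 1),
    sq_nonneg (A 0 0), sq_nonneg (A 0 1), sq_nonneg (A 1 0), sq_nonneg (A 1 1)]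

lemma F2_one : F2 (1 : Matrix (Fin 2) (Fin 2) ℝ) = 2 := by
  unfold F2; simp [Matrix.one_apply]; norm_num

lemma F2_single (i : Fin 2) : F2 (![R1, R2] i) ≤ 2 := by
  fin_cases i
  · simp only [Matrix.cons_val_zero, hR1]; unfold F2; simp; norm_num
  · simp only [Matrix.cons_val_one, Matrix.head_cons, hR2]; unfold F2; simp
    nlinarith [cg_sq, w_lb]

lemma F2_triple (i j k : Fin 2) : F2 (![R1, R2] i * ![R1, R2] j * ![R1, R2] k) ≤ 9/10 := by
  have hc2 := cg_sq
  have hc4 : cg ^ 4 = (7 - 3 * Real.sqrt 5) / 2 := by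
    have : cg ^ 4 = (cg ^ 2) ^ 2 := by ring
    rw [this, hc2]; nlinarith [w_sq]
  have hc6 : cg ^ 6 = 9 - 4 * Real.sqrt 5 := by
    have : cg ^ 6 = (cg ^ 2) ^ 2 * cg ^ 2 := by ring
    rw [this, hc2]; nlinarith [w_sq]
  have hlb := w_lb
  have hub := w_ub
  fin_cases i <;> fin_cases j <;> fin_cases k <;>
    simp only [Matrix.cons_val_zero, Matrix.cons_val_one, Matrix.head_cons, hR1, hR2,
      Matrix.mul_fin_two] <;> unfold F2 <;> simp <;> nlinarith

lemma F2_prod3 (σ : ℕ → Fin 2) : ∀ m, F2 (prodsW ![R1, R2] σ (3 * m)) ≤ 2 * (9/10) ^ m := by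
  intro m
  induction m with
  | zero => simp [prodsW, F2_one]
  | succ m ih =>
    have h3 : 3 * (m + 1) = (3 * m + 1) + 1 + 1 := by ring
    rw [h3]
    have hexp : prodsW ![R1, R2] σ ((3 * m + 1) + 1 + 1) =
        (![R1, R2] (σ (3 * m + 2)) * ![R1, R2] (σ (3 * m + 1)) * ![R1, R2] (σ (3 * m)))
          * prodsW ![R1, R2] σ (3 * m) := by
      show prodsW ![R1, R2] σ (3 * m + 3) = _
      simp only [prodsW]
      noncomm_ring
    rw [hexp]
    calc F2 _ ≤ F2 (![R1, R2] (σ (3 * m + 2)) * ![R1, R2] (σ (3 * m + 1)) * ![R1, R2] (σ (3 * m)))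
        * F2 (prodsW ![R1, R2] σ (3 * m)) := F2_mul _ _
    _ ≤ (9/10) * (2 * (9/10) ^ m) := by
        apply mul_le_mul (F2_triple _ _ _) ih (F2_nonneg _) (by norm_num)
    _ = 2 * (9/10) ^ (m + 1) := by ring

lemma F2_succ (σ : ℕ → Fin 2) (n : ℕ) :
    F2 (prodsW ![R1, R2] σ (n + 1)) ≤ 2 * F2 (prodsW ![R1, R2] σ n) := by
  show F2 (![R1, R2] (σ n) * prodsW ![R1, R2] σ n) ≤ _
  calc F2 _ ≤ F2 (![R1, R2] (σ n)) * F2 (prodsW ![R1, R2] σ n) := F2_mul _ _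
  _ ≤ 2 * F2 (prodsW ![R1, R2] σ n) :=
      mul_le_mul_of_nonneg_right (F2_single _) (F2_nonneg _)

lemma F2_bound (σ : ℕ → Fin 2) (n : ℕ) :
    F2 (prodsW ![R1, R2] σ n) ≤ 8 * (9/10) ^ (n / 3) := by
  set m := n / 3 with hm
  have h3 := F2_prod3 σ m
  have hq : (0:ℝ) ≤ (9/10) ^ m := by positivity
  have hcase : n = 3 * m ∨ n = 3 * m + 1 ∨ n = 3 * m + 2 := by omega
  rcases hcase with h | h | h
  · rw [h]; linarith
  · rw [h]
    have := F2_succ σ (3 * m)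
    linarith
  · rw [h]
    have h1 := F2_succ σ (3 * m)
    have h2 := F2_succ σ (3 * m + 1)
    have := F2_nonneg (prodsW ![R1, R2] σ (3 * m))
    nlinarith

lemma tendsto_zero (σ : ℕ → Fin 2) :
    Tendsto (fun n => prodsW ![R1, R2] σ n) atTop (nhds 0) := by
  refine tendsto_pi_nhds.2 ?_
  intro i
  rw [tendsto_pi_nhds]
  intro j
  have hdiv : Tendsto (fun n : ℕ => n / 3) atTop atTop := by
    apply tendsto_atTop_atTop.2
    intro b
    exact ⟨3 * b, fun a ha => by omega⟩
  have hs : (0:ℝ) ≤ Real.sqrt (9/10) := Real.sqrt_nonneg _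
  have hs1 : Real.sqrt (9/10) < 1 := by
    nlinarith [Real.sq_sqrt (by norm_num : (0:ℝ) ≤ 9/10), Real.sqrt_nonneg (9/10 : ℝ)]
  have hg : Tendsto (fun n : ℕ => Real.sqrt 8 * Real.sqrt (9/10) ^ (n / 3)) atTop (nhds 0) := by
    have := ((tendsto_pow_atTop_nhds_zero_of_lt_one hs hs1).comp hdiv).const_mul (Real.sqrt 8)
    simpa using this
  have hzero : (0 : Matrix (Fin 2) (Fin 2) ℝ) i j = 0 := rfl
  rw [hzero]
  apply squeeze_zero_norm _ hg
  intro n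
  have hb := F2_bound σ n
  have hent : (prodsW ![R1, R2] σ n i j) ^ 2 ≤ F2 (prodsW ![R1, R2] σ n) := by
    unfold F2
    fin_cases i <;> fin_cases j <;> simp only [Fin.zero_eta, Fin.mk_one, id_eq, Fin.isValue] <;> nlinarith [sq_nonneg (prodsW ![R1, R2] σ n 0 0),
      sq_nonneg (prodsW ![R1, R2] σ n 0 1), sq_nonneg (prodsW ![R1, R2] σ n 1 0),
      sq_nonneg (prodsW ![R1, R2] σ n 1 1)]
  have hrhs : 0 ≤ Real.sqrt 8 * Real.sqrt (9/10) ^ (n / 3) := by positivity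
  have hsq : (Real.sqrt 8 * Real.sqrt (9/10) ^ (n / 3)) ^ 2 = 8 * (9/10) ^ (n / 3) := by
    rw [mul_pow, Real.sq_sqrt (by norm_num : (0:ℝ) ≤ 8), ← pow_mul, mul_comm (n / 3) 2,
      pow_mul, Real.sq_sqrt (by norm_num : (0:ℝ) ≤ 9/10)]
  show ‖prodsW ![R1, R2] σ n i j‖ ≤ _
  rw [Real.norm_eq_abs, ← Real.sqrt_sq_eq_abs]
  calc Real.sqrt (prodsW ![R1, R2] σ n i j ^ 2)
      ≤ Real.sqrt ((Real.sqrt 8 * Real.sqrt (9/10) ^ (n / 3)) ^ 2) :=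
        Real.sqrt_le_sqrt (by linarith)
  _ = Real.sqrt 8 * Real.sqrt (9/10) ^ (n / 3) := Real.sqrt_sq hrhs

theorem stmt19 :
    specRad R1 = ENNReal.ofReal (1 / 2) ∧ ENNReal.ofReal (1 / 2 : ℝ) < 1 ∧
    specRad R2 = ENNReal.ofReal cg ∧ ENNReal.ofReal cg < 1 ∧
    specRad (R1 * R2) = ENNReal.ofReal cg ∧
    PopNorm 1 R1 = 1 ∧ PopNorm 1 R2 = 1 ∧
    ∀ σ : ℕ → Fin 2, Tendsto (fun n => prodsW ![R1, R2] σ n) atTop (nhds 0) :=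
  ⟨sr_R1, by rw [ENNReal.ofReal_lt_one]; norm_num, sr_R2, ENNReal.ofReal_lt_one.2 cg_lt_one,
    sr_R12, popnorm_R1, popnorm_R2, tendsto_zero⟩
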